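/- Let M be a matroid with weight function w, and let C ⊆ A ⊆ E be a circuit contained in A. If e is an element of C of minimum weight among elements of C, then the weighted rank satisfies φ_w(A) = φ_w(A \ {e}). -/

import Mathlib

open Classical Finset

/-- Weighted rank function of a matroid: maximum weight of an independent subset. -/
noncomputable def phi {α : Type*} (M : Matroid α) (w : α → ℝ) (A : Finset α) : ℝ :=
  sSup {x : ℝ | ∃ I : Finset α, ↑I ⊆ (A : Set α) ∧ M.Indep ↑I ∧ x = ∑ a ∈ I, w a}

/-- A circuit: a minimal dependent set. -/
def IsCircuit {α : Type*} (M : Matroid α) (C : Set α) : Prop :=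
  M.Dep C ∧ ∀ D ⊂ C, ¬ M.Dep D

lemma phi_bdd {α : Type*} (M : Matroid α) (w : α → ℝ) (hw : ∀ a, 0 ≤ w a) (A : Finset α) :
    BddAbove {x : ℝ | ∃ I : Finset α, ↑I ⊆ (A : Set α) ∧ M.Indep ↑I ∧ x = ∑ a ∈ I, w a} := by
  refine ⟨∑ a ∈ A, w a, ?_⟩
  rintro x ⟨I, hIA, -, rfl⟩
  exact Finset.sum_le_sum_of_subset_of_nonneg (Finset.coe_subset.1 hIA)
    (fun a _ _ => hw a)

theorem phi_erase_min_of_circuit {α : Type*} [DecidableEq α] (M : Matroid α) (w : α → ℝ)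
    (hw : ∀ a, 0 ≤ w a) (A C : Finset α) (hA : (A : Set α) ⊆ M.E)
    (hCA : C ⊆ A) (hC : IsCircuit M ↑C)
    (e : α) (he : e ∈ C) (hmin : ∀ c ∈ C, w e ≤ w c) :
    phi M w A = phi M w (A.erase e) := by
  refine le_antisymm ?_ ?_
  · -- main direction
    refine csSup_le ⟨0, ∅, by simp⟩ ?_
    rintro x ⟨I, hIA, hIind, rfl⟩
    by_cases heI : e ∈ I
    · -- construct better set avoiding e
      set J : Finset α := I.erase e with hJdef
      have hJI : (J : Set α) ⊆ (I : Set α) := by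
        exact_mod_cast Finset.coe_subset.2 (Finset.erase_subset _ _)
      have hJind : M.Indep ↑J := hIind.subset hJI
      -- C \ {e} is independent
      have hCdiff_indep : M.Indep ((C : Set α) \ {e}) := by
        have hsub : (C : Set α) \ {e} ⊂ ↑C := by
          refine (Set.sdiff_singleton_ssubset).2 he
        by_contra hni
        exact hC.2 _ hsub ⟨hni, (Set.diff_subset).trans hC.1.subset_ground⟩
      -- e ∈ closure (C \ {e})
      have heCl : e ∈ M.closure ((C : Set α) \ {e}) := by
        rw [hCdiff_indep.mem_closure_iff]
        left
        have : insert e ((C : Set α) \ {e}) = ↑C := by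
          rw [Set.insert_diff_singleton]
          exact Set.insert_eq_self.2 (by exact_mod_cast he)
        rw [this]; exact hC.1
      set X : Set α := ↑J ∪ ((C : Set α) \ {e}) with hXdef
      have hXE : X ⊆ M.E := Set.union_subset (hJI.trans (hIA.trans hA))
        ((Set.diff_subset).trans ((Finset.coe_subset.2 hCA).trans hA))
      obtain ⟨B, hB, hJB⟩ := hJind.subset_isBasis_of_subset (Set.subset_union_left) hXE
      have hBX := hB.subset
      have hBfin : B.Finite := (Set.Finite.union J.finite_toSet
        ((C.finite_toSet).diff)).subset hBX
      -- B ≠ J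
      have hne : B ≠ ↑J := by
        intro hBJ
        have h1 : e ∈ M.closure X :=
          M.closure_subset_closure Set.subset_union_right heCl
        rw [← hB.closure_eq_closure, hBJ] at h1
        have : (J : Set α) = ↑I \ {e} := by
          simp [hJdef, Finset.coe_erase]
        rw [this] at h1
        exact hIind.notMem_closure_sdiff_of_mem heI h1
      obtain ⟨b, hbB, hbJ⟩ : ∃ b ∈ B, b ∉ (J : Set α) := by
        by_contra h
        push_neg at h
        exact hne (Set.Subset.antisymm h hJB)
      have hbC : b ∈ C ∧ b ≠ e := by
        rcases hBX hbB with h | h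
        · exact absurd h hbJ
        · exact ⟨by exact_mod_cast h.1, h.2⟩
      set B' : Finset α := hBfin.toFinset with hB'def
      have hB'coe : (B' : Set α) = B := hBfin.coe_toFinset
      have hJB' : J ⊆ B' := by
        rw [← Finset.coe_subset, hB'coe]; exact hJB
      have hbB' : b ∈ B' := by rw [← Finset.mem_coe, hB'coe]; exact hbB
      have hbJ' : b ∉ J := by rwa [← Finset.mem_coe]
      -- B' ⊆ A.erase e
      have hB'sub : (B' : Set α) ⊆ ((A.erase e : Finset α) : Set α) := by
        rw [hB'coe, Finset.coe_erase]
        intro y hy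
        rcases hBX hy with h | h
        · refine ⟨hIA (hJI h), ?_⟩
          intro hye; apply Finset.notMem_erase e I
          rw [hye] at h; exact_mod_cast h
        · exact ⟨Finset.coe_subset.2 hCA h.1, h.2⟩
      -- weights
      have hsumI : ∑ a ∈ I, w a = w e + ∑ a ∈ J, w a :=
        (Finset.add_sum_erase I w heI).symm
      have hsumB : ∑ a ∈ B', w a = ∑ a ∈ J, w a + ∑ a ∈ B' \ J, w a := by
        rw [add_comm, Finset.sum_sdiff hJB']
      have hwb : w e ≤ ∑ a ∈ B' \ J, w a := by
        have hb' : b ∈ B' \ J := Finset.mem_sdiff.2 ⟨hbB', hbJ'⟩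
        calc w e ≤ w b := hmin b hbC.1
        _ ≤ ∑ a ∈ B' \ J, w a :=
            Finset.single_le_sum (fun a _ => hw a) hb'
      have hle : ∑ a ∈ I, w a ≤ ∑ a ∈ B', w a := by
        rw [hsumI, hsumB]; linarith
      refine hle.trans (le_csSup (phi_bdd M w hw _) ?_)
      exact ⟨B', hB'sub, hB'coe ▸ hB.indep, rfl⟩
    · refine le_csSup (phi_bdd M w hw _) ⟨I, ?_, hIind, rfl⟩
      rw [Finset.coe_erase]
      exact fun y hy => ⟨hIA hy, fun hye =>
        heI (Set.mem_singleton_iff.1 hye ▸ Finset.mem_coe.1 hy)⟩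
  · refine csSup_le_csSup (phi_bdd M w hw A) ⟨0, ∅, by simp⟩ ?_
    rintro x ⟨I, hIA, hIind, rfl⟩
    exact ⟨I, hIA.trans (by rw [Finset.coe_erase]; exact Set.diff_subset), hIind, rfl⟩
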